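/- Let p be an odd prime, χ the Legendre symbol mod p extended by χ(0)=0. Define the length-2p binary sequence y by y_0 = 1, y_p = -1, and y_k = χ(k mod p) for 0 < k < 2p with k ≠ p. Then R_y(p) = 2p - 4 and R_y(u) = -2 for all u with 0 < u < 2p and u ≠ p. -/

import Mathlib

open Finset

lemma legendre_auto {F : Type*} [Field F] [Fintype F] [DecidableEq F]
    (hF : ringChar F ≠ 2) (a : F) (ha : a ≠ 0) :
    ∑ t : F, quadraticChar F t * quadraticChar F (t + a) = -1 := by
  rw [← Finset.sum_subset (Finset.subset_univ (univ \ {(0:F)}))]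
  · have h1 : ∀ t ∈ univ \ {(0:F)},
        quadraticChar F t * quadraticChar F (t + a) = quadraticChar F (1 + a * t⁻¹) := by
      intro t ht
      have ht0 : t ≠ 0 := by simpa using ht
      have : t + a = t * (1 + a * t⁻¹) := by field_simp
      rw [this, map_mul, ← mul_assoc, ← sq, quadraticChar_sq_one ht0, one_mul]
    rw [Finset.sum_congr rfl h1]
    have h2 : ∑ t ∈ univ \ {(0:F)}, quadraticChar F (1 + a * t⁻¹)
        = ∑ s ∈ univ \ {(1:F)}, quadraticChar F s := by
      refine Finset.sum_nbij' (fun t => 1 + a * t⁻¹) (fun s => a * (s - 1)⁻¹) ?_ ?_ ?_ ?_ ?_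
      · intro t ht
        have ht0 : t ≠ 0 := by simpa using ht
        simp only [mem_sdiff, mem_univ, mem_singleton, true_and]
        intro h
        have : a * t⁻¹ = 0 := by linear_combination h
        simpa [ht0, ha] using this
      · intro s hs
        have hs1 : s ≠ 1 := by simpa using hs
        simp only [mem_sdiff, mem_univ, mem_singleton, true_and]
        intro h
        have : s - 1 ≠ 0 := sub_ne_zero.mpr hs1
        simp [ha, this, inv_eq_zero] at h
      · intro t ht
        have ht0 : t ≠ 0 := by simpa using ht
        field_simp
        simp [ha]
      · intro s hs
        have hs1 : s ≠ 1 := by simpa using hs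
        have : s - 1 ≠ 0 := sub_ne_zero.mpr hs1
        field_simp
        ring
      · intro t ht; rfl
    rw [h2, Finset.sum_sdiff_eq_sub (Finset.subset_univ _), quadraticChar_sum_zero hF]
    simp
  · intro t _ ht
    have : t = 0 := by simpa using ht
    simp [this, quadraticChar_zero]

lemma sum_double {p : ℕ} [NeZero p] [NeZero (2*p)] (hcop : Nat.Coprime 2 p) (G : ZMod p → ℤ) :
    ∑ k : ZMod (2*p), G ((ZMod.castHom (dvd_mul_left p 2) (ZMod p)) k) = 2 * ∑ t : ZMod p, G t := by
  let e := ZMod.chineseRemainder hcop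
  have hφ : (ZMod.castHom (dvd_mul_left p 2) (ZMod p)) =
      (RingHom.snd (ZMod 2) (ZMod p)).comp e.toRingHom := RingHom.ext_zmod _ _
  rw [hφ]
  calc ∑ k : ZMod (2*p), G (((RingHom.snd (ZMod 2) (ZMod p)).comp e.toRingHom) k)
      = ∑ k : ZMod (2*p), G ((e k).2) := rfl
    _ = ∑ x : ZMod 2 × ZMod p, G x.2 := Fintype.sum_equiv e.toEquiv _ _ (fun k => rfl)
    _ = ∑ _a : ZMod 2, ∑ t : ZMod p, G t := Fintype.sum_prod_type _
    _ = 2 * ∑ t : ZMod p, G t := by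
        rw [Finset.sum_const, Finset.card_univ, ZMod.card, nsmul_eq_mul]; norm_num

open Finset in
/-- Proposition (second construction): the length-`2p` binary sequence `y` with
`y_0 = 1`, `y_p = -1`, and `y_k = χ(k mod p)` otherwise satisfies `R_y(p) = 2p - 4`
and `R_y(u) = -2` for `u ∉ {0, p}`. -/
theorem doubled_legendre_autocorrelation (p : ℕ) [Fact p.Prime] (hodd : Odd p)
    [NeZero (2 * p)]
    (χ : ZMod p → ℤ)
    (hχ : ∀ α : ZMod p, χ α = if α = 0 then 0 else if IsSquare α then 1 else -1)
    (y : ZMod (2 * p) → ℤ)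
    (hy0 : y 0 = 1) (hyp : y (p : ZMod (2 * p)) = -1)
    (hy : ∀ k : ZMod (2 * p), k ≠ 0 → k ≠ (p : ZMod (2 * p)) →
      y k = χ ((k.val : ZMod p)))
    (hybin : ∀ k, y k = 1 ∨ y k = -1) :
    (∑ k : ZMod (2 * p), y k * y (k + (p : ZMod (2 * p)))) = 2 * p - 4 ∧
      ∀ u : ZMod (2 * p), u ≠ 0 → u ≠ (p : ZMod (2 * p)) →
        ∑ k : ZMod (2 * p), y k * y (k + u) = -2 := by
  have hp : p.Prime := Fact.out
  have hp2 : p ≠ 2 := by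
    rintro rfl; rw [Nat.odd_iff] at hodd; omega
  have hp3 : 3 ≤ p := by
    have := hp.two_le; rw [Nat.odd_iff] at hodd; omega
  set P : ZMod (2*p) := (p : ZMod (2*p)) with hPdef
  have hPval : P.val = p := by
    rw [hPdef, ZMod.val_natCast_of_lt (by omega)]
  have hP0 : P ≠ 0 := by
    intro h
    have := congrArg ZMod.val h
    rw [hPval, ZMod.val_zero] at this
    omega
  have hPP : P + P = 0 := by
    rw [hPdef, ← Nat.cast_add, show p + p = 2*p from (two_mul p).symm, ZMod.natCast_self]
  have hnegP : -P = P := neg_eq_of_add_eq_zero_left hPP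
  set φ : ZMod (2*p) →+* ZMod p := ZMod.castHom (dvd_mul_left p 2) (ZMod p) with hφdef
  have hyφ : ∀ k : ZMod (2*p), k ≠ 0 → k ≠ P → y k = χ (φ k) := by
    intro k h1 h2
    rw [hy k h1 h2]
    congr 1
    rw [hφdef, ZMod.castHom_apply, ← ZMod.natCast_val]
  have hkself : ∀ k : ZMod (2*p), ((k.val : ℕ) : ZMod (2*p)) = k := by
    intro k; simp [ZMod.natCast_val, ZMod.cast_id]
  have hφ0 : ∀ k : ZMod (2*p), φ k = 0 ↔ (k = 0 ∨ k = P) := by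
    intro k
    constructor
    · intro h
      have hd : p ∣ k.val := by
        rwa [hφdef, ZMod.castHom_apply, ← ZMod.natCast_val,
          ZMod.natCast_eq_zero_iff] at h
      have hv : k.val < 2*p := ZMod.val_lt k
      obtain ⟨c, hc⟩ := hd
      have hcc : c < 2 := Nat.lt_of_mul_lt_mul_left (a := p) (by omega)
      have hc2 : c = 0 ∨ c = 1 := by omega
      rcases hc2 with rfl | rfl
      · left
        rw [← ZMod.val_eq_zero]; omega
      · right
        rw [← hkself k, hc]; simp [hPdef]
    · rintro (rfl | rfl)
      · exact map_zero φ
      · rw [hPdef, map_natCast, ZMod.natCast_self]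
  have hφP : φ P = 0 := (hφ0 P).mpr (Or.inr rfl)
  have hχ0 : χ 0 = 0 := by rw [hχ]; simp
  have hχq : ∀ α, χ α = quadraticChar (ZMod p) α := by
    intro α
    rw [hχ, quadraticChar_apply, quadraticCharFun]
  have hχsq : ∀ α : ZMod p, α ≠ 0 → χ α * χ α = 1 := by
    intro α hα
    rw [hχq α, ← sq, quadraticChar_sq_one hα]
  have hrc : ringChar (ZMod p) ≠ 2 := by
    rw [ZMod.ringChar_zmod_n]; exact hp2
  have hcop : Nat.Coprime 2 p := by
    refine (Nat.Prime.coprime_iff_not_dvd Nat.prime_two).mpr ?_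
    rw [Nat.odd_iff] at hodd
    omega
  have hcard : Fintype.card (ZMod (2*p)) = 2*p := ZMod.card _
  constructor
  · -- Part 1: u = p
    have hsplit := Finset.sum_sdiff (f := fun k : ZMod (2*p) => y k * y (k + P))
      (Finset.subset_univ ({0, P} : Finset (ZMod (2*p))))
    rw [← hsplit]
    have h0P : (0 : ZMod (2*p)) ≠ P := fun h => hP0 h.symm
    have hEcard : ({0, P} : Finset (ZMod (2*p))).card = 2 := Finset.card_pair h0P
    have hsum2 : ∑ k ∈ ({0, P} : Finset (ZMod (2*p))), y k * y (k + P) = -2 := by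
      rw [Finset.sum_pair h0P, zero_add, hPP, hy0, hyp]
      ring
    have hsum1 : ∑ k ∈ univ \ ({0, P} : Finset (ZMod (2*p))), y k * y (k + P)
        = (2*p - 2 : ℤ) := by
      have hterm : ∀ k ∈ univ \ ({0, P} : Finset (ZMod (2*p))), y k * y (k + P) = 1 := by
        intro k hk
        simp only [mem_sdiff, mem_univ, mem_insert, mem_singleton, true_and] at hk
        push_neg at hk
        obtain ⟨hk0, hkP⟩ := hk
        have h1 : k + P ≠ 0 := by
          intro h
          exact hkP (by rw [← hnegP]; exact eq_neg_of_add_eq_zero_left h)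
        have h2 : k + P ≠ P := by
          intro h
          exact hk0 (by simpa using h)
        rw [hyφ k hk0 hkP, hyφ _ h1 h2, map_add, hφP, add_zero]
        exact hχsq _ (fun h => (not_or.mpr ⟨hk0, hkP⟩) ((hφ0 k).mp h))
      rw [Finset.sum_congr rfl hterm, Finset.sum_const, Finset.card_sdiff_of_subset (subset_univ _),
        Finset.card_univ, hcard, hEcard, nsmul_eq_mul]
      push_cast [Nat.cast_sub (show 2 ≤ 2*p by omega)]
      ring
    rw [hsum1, hsum2]
    ring
  · -- Part 2
    intro u hu0 huP
    have ha : φ u ≠ 0 := fun h => (not_or.mpr ⟨hu0, huP⟩) ((hφ0 u).mp h)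
    have hnegu0 : -u ≠ 0 := neg_ne_zero.mpr hu0
    have hnegu : -u ≠ P := by
      intro h; exact huP (by rw [← hnegP, ← h, neg_neg])
    have hPu0 : P - u ≠ 0 := by
      intro h; exact huP (by rw [← sub_eq_zero.mp h])
    have hPuP : P - u ≠ P := by
      intro h; exact hu0 (sub_eq_self.mp h)
    have hPu0' : P + u ≠ 0 := by
      intro h; exact huP (by rw [← hnegP]; exact (neg_eq_of_add_eq_zero_right h).symm)
    have hPuP' : P + u ≠ P := by
      intro h; exact hu0 (by simpa using h)
    -- the exceptional set
    set E : Finset (ZMod (2*p)) := {0, P, -u, P - u} with hEdef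
    have h0P : (0 : ZMod (2*p)) ≠ P := fun h => hP0 h.symm
    have h0nu : (0 : ZMod (2*p)) ≠ -u := fun h => hnegu0 h.symm
    have h0Pu : (0 : ZMod (2*p)) ≠ P - u := fun h => hPu0 h.symm
    have hPnu : P ≠ -u := fun h => hnegu h.symm
    have hPPu : P ≠ P - u := fun h => hPuP h.symm
    have hnuPu : -u ≠ P - u := by
      intro h
      apply hP0
      have : P - u - (-u) = 0 := by rw [← h]; ring
      linear_combination this
    -- termwise equality off E
    have hterm : ∀ k ∈ univ \ E, y k * y (k + u) = χ (φ k) * χ (φ k + φ u) := by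
      intro k hk
      simp only [hEdef, mem_sdiff, mem_univ, mem_insert, mem_singleton, true_and] at hk
      push_neg at hk
      obtain ⟨hk0, hkP, hknu, hkPu⟩ := hk
      have h1 : k + u ≠ 0 := by
        intro h; exact hknu (eq_neg_of_add_eq_zero_left h)
      have h2 : k + u ≠ P := by
        intro h; exact hkPu (by rw [← h]; ring)
      rw [hyφ k hk0 hkP, hyφ _ h1 h2, map_add]
    -- sums over E
    have hsumE : ∑ k ∈ E, y k * y (k + u) = 0 := by
      have hm1 : (0:ZMod (2*p)) ∉ ({P, -u, P-u} : Finset (ZMod (2*p))) := by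
        simp [h0P, h0nu, h0Pu]
      have hm2 : P ∉ ({-u, P-u} : Finset (ZMod (2*p))) := by
        simp [hPnu, hPPu]
      have hm3 : -u ∉ ({P-u} : Finset (ZMod (2*p))) := by
        simp [hnuPu]
      rw [hEdef, Finset.sum_insert hm1, Finset.sum_insert hm2, Finset.sum_insert hm3,
        Finset.sum_singleton]
      have e0 : P - u + u = P := by ring
      have e1 : φ (P + u) = φ u := by rw [map_add, hφP, zero_add]
      have e2 : φ (P - u) = φ (-u) := by rw [map_sub, map_neg, hφP, zero_sub]
      rw [zero_add, hy0, hyp, neg_add_cancel, hy0, e0, hyp,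
        hyφ u hu0 huP, hyφ (P+u) hPu0' hPuP', hyφ (-u) hnegu0 hnegu,
        hyφ (P-u) hPu0 hPuP, e1, e2]
      ring
    have hsumEχ : ∑ k ∈ E, χ (φ k) * χ (φ k + φ u) = 0 := by
      have hm1 : (0:ZMod (2*p)) ∉ ({P, -u, P-u} : Finset (ZMod (2*p))) := by
        simp [h0P, h0nu, h0Pu]
      have hm2 : P ∉ ({-u, P-u} : Finset (ZMod (2*p))) := by
        simp [hPnu, hPPu]
      have hm3 : -u ∉ ({P-u} : Finset (ZMod (2*p))) := by
        simp [hnuPu]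
      rw [hEdef, Finset.sum_insert hm1, Finset.sum_insert hm2, Finset.sum_insert hm3,
        Finset.sum_singleton]
      rw [map_zero, hφP, map_neg, map_sub, hφP]
      simp [hχ0]
    -- combine
    have key : ∑ k : ZMod (2*p), y k * y (k + u)
        = ∑ k : ZMod (2*p), χ (φ k) * χ (φ k + φ u) := by
      rw [← Finset.sum_sdiff (Finset.subset_univ E) (f := fun k => y k * y (k + u)),
        ← Finset.sum_sdiff (Finset.subset_univ E) (f := fun k => χ (φ k) * χ (φ k + φ u)),
        hsumE, hsumEχ, Finset.sum_congr rfl hterm]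
    rw [key]
    have hdbl := sum_double (p := p) hcop (fun t => χ t * χ (t + φ u))
    rw [hdbl]
    have : ∑ t : ZMod p, χ t * χ (t + φ u) = -1 := by
      have := legendre_auto hrc (φ u) ha
      rw [← this]
      exact Finset.sum_congr rfl fun t _ => by rw [hχq t, hχq (t + φ u)]
    rw [this]
    ring
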